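/- Let f and g be the morphisms on {0,1,2} defined by f(0) = 02, f(1) = 101, f(2) = 10 and g(0) = 0210, g(1) = 1, g(2) = 10. Then f^∞(0) = g^∞(0). -/

import Mathlib

/-- A morphism `f : Γ → Γ⁺` applied to a finite word, by concatenation. -/
def applyW {Γ : Type*} (f : Γ → List Γ) (w : List Γ) : List Γ := w.flatMap f

/-- A morphism applied to an infinite sequence, by concatenation
(meaningful when every `f a` is nonempty: then the `n`-th letter of
`f(σ(0))f(σ(1))⋯` lies within the first `n+1` blocks). -/
def applyS {Γ : Type*} (f : Γ → List Γ) (σ : ℕ → Γ) (n : ℕ) : Γ :=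
  ((List.range (n + 1)).flatMap fun i => f (σ i)).getD n (σ 0)

/-- A coding applied letterwise to an infinite sequence. -/
def applyC {Γ S : Type*} (τ : Γ → S) (σ : ℕ → Γ) : ℕ → S := fun n => τ (σ n)

/-- The fixed point `f^∞(a)` of a morphism `f` with `f a = a·u`, `u` nonempty:
its `n`-th letter is the `n`-th letter of `f^(n+1)(a)` (which has length `> n`). -/
def fixpt {Γ : Type*} (f : Γ → List Γ) (a : Γ) (n : ℕ) : Γ :=
  ((applyW f)^[n + 1] [a]).getD n a

section Helpers

variable {Γ : Type*}

lemma applyW_append (f : Γ → List Γ) (u v : List Γ) :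
    applyW f (u ++ v) = applyW f u ++ applyW f v := List.flatMap_append (xs := u) (ys := v) (f := f)

lemma applyW_cons (f : Γ → List Γ) (a : Γ) (w : List Γ) :
    applyW f (a :: w) = f a ++ applyW f w := rfl

lemma length_applyW_ge (f : Γ → List Γ) (h1 : ∀ x, f x ≠ []) (w : List Γ) :
    w.length ≤ (applyW f w).length := by
  induction w with
  | nil => simp [applyW]
  | cons a t ih =>
    rw [applyW_cons, List.length_append, List.length_cons]
    have : 1 ≤ (f a).length := List.length_pos_iff.mpr (h1 a)
    omega

lemma applyW_ne_nil (f : Γ → List Γ) (h1 : ∀ x, f x ≠ []) {w : List Γ} (hw : w ≠ []) :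
    applyW f w ≠ [] := by
  cases w with
  | nil => exact absurd rfl hw
  | cons b t =>
    rw [applyW_cons]
    simp [h1 b]

lemma prefix_applyW (f : Γ → List Γ) {u v : List Γ} (h : u <+: v) :
    applyW f u <+: applyW f v := by
  obtain ⟨t, rfl⟩ := h
  rw [applyW_append]
  exact List.prefix_append _ _

lemma prefix_getElem? {p q : List Γ} (h : p <+: q) {i : ℕ} (hi : i < p.length) :
    q[i]? = p[i]? := by
  obtain ⟨t, rfl⟩ := h
  exact List.getElem?_append_left hi

/-- `IsPref w σ`: the finite word `w` is a prefix of the sequence `σ`. -/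
def IsPref (w : List Γ) (σ : ℕ → Γ) : Prop :=
  ∀ i, (h : i < w.length) → w[i] = σ i

lemma IsPref.getElem? {w : List Γ} {σ : ℕ → Γ} (h : IsPref w σ) {i : ℕ}
    (hi : i < w.length) : w[i]? = some (σ i) := by
  rw [List.getElem?_eq_getElem hi, h i hi]

lemma IsPref.mono {w v : List Γ} {σ : ℕ → Γ} (h : IsPref v σ) (hp : w <+: v) :
    IsPref w σ := by
  intro i hi
  have hlen : i < v.length := lt_of_lt_of_le hi hp.length_le
  have h2 : v[i]? = w[i]? := prefix_getElem? hp hi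
  rw [h.getElem? hlen, List.getElem?_eq_getElem hi] at h2
  exact (Option.some_injective _ h2.symm)

lemma IsPref.getD {w : List Γ} {σ : ℕ → Γ} (h : IsPref w σ) {n : ℕ} (hn : n < w.length)
    (d : Γ) : w.getD n d = σ n := by
  rw [List.getD_eq_getElem?_getD, h.getElem? hn]
  rfl

lemma IsPref.eq_map_range {w : List Γ} {σ : ℕ → Γ} (h : IsPref w σ) :
    w = (List.range w.length).map σ := by
  apply List.ext_getElem (by simp)
  intro i hi _
  simp [h i hi]

lemma isPref_map_range (σ : ℕ → Γ) (k : ℕ) : IsPref ((List.range k).map σ) σ := by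
  intro i hi
  simp at hi ⊢

lemma applyW_iterate_append (f : Γ → List Γ) (m : ℕ) (u v : List Γ) :
    (applyW f)^[m] (u ++ v) = (applyW f)^[m] u ++ (applyW f)^[m] v := by
  induction m generalizing u v with
  | zero => simp
  | succ m ih => rw [Function.iterate_succ_apply, Function.iterate_succ_apply,
      Function.iterate_succ_apply, applyW_append, ih]

lemma applyW_iterate_ne_nil (f : Γ → List Γ) (h1 : ∀ x, f x ≠ []) (m : ℕ) {w : List Γ}
    (hw : w ≠ []) : (applyW f)^[m] w ≠ [] := by
  induction m with
  | zero => simpa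
  | succ j ih => rw [Function.iterate_succ_apply']; exact applyW_ne_nil f h1 ih

variable (f : Γ → List Γ) (a : Γ)

/-- The finite approximations `f^m(a)`. -/
def pre (m : ℕ) : List Γ := (applyW f)^[m] [a]

lemma pre_succ (m : ℕ) : pre f a (m + 1) = applyW f (pre f a m) :=
  Function.iterate_succ_apply' _ _ _

lemma fixpt_eq_pre (n : ℕ) : fixpt f a n = (pre f a (n + 1)).getD n a := rfl

variable {f a} {u : List Γ} (hfa : f a = a :: u) (hu : u ≠ []) (h1 : ∀ x, f x ≠ [])
include hfa hu h1

omit hu h1 in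
lemma pre_prefix_succ (m : ℕ) : pre f a m <+: pre f a (m + 1) := by
  have h3 : pre f a (m + 1) = (applyW f)^[m] (applyW f [a]) :=
    Function.iterate_succ_apply _ _ _
  have h2 : applyW f [a] = [a] ++ u := by simp [applyW, hfa]
  rw [h3, h2, applyW_iterate_append]
  exact List.prefix_append _ _

omit hu h1 in
lemma pre_prefix {m m' : ℕ} (h : m ≤ m') : pre f a m <+: pre f a m' := by
  induction m' with
  | zero => simp_all
  | succ k ih =>
    rcases Nat.lt_or_ge m (k+1) with hh | hh
    · exact (ih (by omega)).trans (pre_prefix_succ hfa k)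
    · have : m = k + 1 := by omega
      subst this; rfl

lemma length_pre (m : ℕ) : m < (pre f a m).length := by
  induction m with
  | zero => simp [pre]
  | succ k ih =>
    have h2 : applyW f [a] = [a] ++ u := by simp [applyW, hfa]
    have h3 : pre f a (k + 1) = pre f a k ++ (applyW f)^[k] u := by
      rw [pre, Function.iterate_succ_apply, h2, applyW_iterate_append]; rfl
    rw [h3, List.length_append]
    have hne : ((applyW f)^[k] u) ≠ [] := applyW_iterate_ne_nil f h1 k hu
    have : ((applyW f)^[k] u).length ≠ 0 := fun hh => hne (List.length_eq_zero_iff.mp hh)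
    omega

lemma isPref_pre (m : ℕ) : IsPref (pre f a m) (fixpt f a) := by
  intro i hi
  have hlen : i < (pre f a (i + 1)).length :=
    Nat.lt_of_succ_lt (length_pre hfa hu h1 (i + 1))
  rw [fixpt_eq_pre, List.getD_eq_getElem?_getD]
  rcases Nat.le_total m (i + 1) with h | h
  · rw [prefix_getElem? (pre_prefix hfa h) hi, List.getElem?_eq_getElem hi]
    rfl
  · have h2 : (pre f a m)[i]? = (pre f a (i+1))[i]? :=
      prefix_getElem? (pre_prefix hfa h) hlen
    rw [List.getElem?_eq_getElem hi] at h2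
    rw [← h2]
    rfl

lemma map_range_fixpt (k : ℕ) :
    (List.range k).map (fixpt f a) = (pre f a k).take k := by
  have hlenk : k ≤ (pre f a k).length := (length_pre hfa hu h1 k).le
  rw [(((isPref_pre hfa hu h1 k)).mono (List.take_prefix k _)).eq_map_range]
  congr 2
  rw [List.length_take]
  omega

lemma isPref_applyW {w : List Γ} (hw : IsPref w (fixpt f a)) :
    IsPref (applyW f w) (fixpt f a) := by
  set M := w.length with hM
  have h2 : w = (pre f a M).take M := by
    rw [hw.eq_map_range, ← map_range_fixpt hfa hu h1 M, hM]
  have h3 : applyW f w <+: pre f a (M + 1) := by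
    rw [pre_succ, h2]
    exact prefix_applyW f (List.take_prefix _ _)
  exact (isPref_pre hfa hu h1 (M + 1)).mono h3

end Helpers
section Fixed

variable {Γ : Type*}

lemma applyS_eq_applyW (g : Γ → List Γ) (σ : ℕ → Γ) (n : ℕ) :
    applyS g σ n = (applyW g ((List.range (n + 1)).map σ)).getD n (σ 0) := by
  rw [applyS, applyW, List.flatMap_map]

lemma applyS_eq_self_of {g : Γ → List Γ} {σ : ℕ → Γ} (h1 : ∀ x, g x ≠ [])
    (H : ∀ k, IsPref (applyW g ((List.range k).map σ)) σ) :
    applyS g σ = σ := by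
  funext n
  rw [applyS_eq_applyW]
  have hlen : n < (applyW g ((List.range (n + 1)).map σ)).length :=
    Nat.lt_of_succ_le (le_trans (by simp) (length_applyW_ge g h1 _))
  exact (H (n + 1)).getD hlen _

lemma applyS_fixpt {f : Γ → List Γ} {a : Γ} {u : List Γ}
    (hfa : f a = a :: u) (hu : u ≠ []) (h1 : ∀ x, f x ≠ []) :
    applyS f (fixpt f a) = fixpt f a :=
  applyS_eq_self_of h1 fun k => isPref_applyW hfa hu h1 (isPref_map_range _ k)

/-- Uniqueness of the fixed point: two sequences fixed by `f` with the same
first letter, whose first block has length `≥ 2`, agree. -/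
lemma fixed_unique {f : Γ → List Γ} {σ σ' : ℕ → Γ} (h1 : ∀ x, f x ≠ [])
    (h2 : 2 ≤ (f (σ 0)).length) (hσ : applyS f σ = σ) (hσ' : applyS f σ' = σ')
    (h0 : σ 0 = σ' 0) : σ = σ' := by
  funext n
  induction n using Nat.strong_induction_on with
  | _ n ih =>
    match n with
    | 0 => exact h0
    | Nat.succ k =>
      have hagree : (List.range (k + 1)).map σ = (List.range (k + 1)).map σ' := by
        apply List.ext_getElem (by simp)
        intro i hi _
        simp only [List.getElem_map, List.getElem_range]
        exact ih i (by simp at hi; omega)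
      have key : ∀ τ : ℕ → Γ, (List.range (k + 1)).map τ = (List.range (k + 1)).map σ →
          τ 0 = σ 0 → applyS f τ (k + 1) =
            (applyW f ((List.range (k + 1)).map σ)).getD (k + 1) (σ 0) := by
        intro τ hτ hτ0
        rw [applyS_eq_applyW, hτ0]
        have hsplit : (List.range (k + 1 + 1)).map τ
            = (List.range (k + 1)).map σ ++ [τ (k + 1)] := by
          rw [List.range_succ, List.map_append, hτ]
          rfl
        rw [hsplit, applyW_append]
        have hlen : k + 1 < (applyW f ((List.range (k + 1)).map σ)).length := by
          have hfirst : (List.range (k + 1)).map σ = σ 0 :: ((List.range k).map (σ ∘ Nat.succ)) := by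
            rw [List.range_succ_eq_map]
            simp [Function.comp_def]
          have : (applyW f ((List.range (k + 1)).map σ)).length
              = (f (σ 0)).length + (applyW f ((List.range k).map (σ ∘ Nat.succ))).length := by
            rw [hfirst, applyW_cons, List.length_append]
          have h4 : k ≤ (applyW f ((List.range k).map (σ ∘ Nat.succ))).length :=
            le_trans (by simp) (length_applyW_ge f h1 _)
          omega
        rw [List.getD_eq_getElem?_getD, List.getElem?_append_left hlen,
          ← List.getD_eq_getElem?_getD]
      have e1 := key σ rfl rfl
      have e2 := key σ' hagree.symm h0.symm
      rw [hσ] at e1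
      rw [hσ'] at e2
      exact e1.trans e2.symm

end Fixed

section Specific
open List

abbrev Fm : Fin 3 → List (Fin 3) := ![[0, 2], [1, 0, 1], [1, 0]]
abbrev Gm : Fin 3 → List (Fin 3) := ![[0, 2, 1, 0], [1], [1, 0]]

/-- The pairs of consecutive letters that can occur in the fixed point. -/
def Rb : Fin 3 → Fin 3 → Bool :=
  ![![false, true, true], ![true, false, false], ![false, true, false]]

def Rr (a b : Fin 3) : Prop := Rb a b = true

instance : ∀ a b, Decidable (Rr a b) := fun a b => inferInstanceAs (Decidable (Rb a b = true))

def cz : List (Fin 3) := [1, 0, 2]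
def cc : Fin 3 → List (Fin 3) := ![cz, [], cz]
def dd : Fin 3 → List (Fin 3) := ![[], cz, cz]

lemma Fm_ne_nil : ∀ x, Fm x ≠ [] := by decide
lemma Gm_ne_nil : ∀ x, Gm x ≠ [] := by decide
lemma hF0 : Fm 0 = 0 :: [2] := rfl
lemma hG0 : Gm 0 = 0 :: [2, 1, 0] := rfl

lemma base_id : ∀ a, applyW Gm (Fm a) ++ cc a = dd a ++ applyW Fm (Gm a) := by decide

lemma step_id : ∀ a b, Rr a b →
    applyW Gm (Fm a) ++ dd b = dd a ++ applyW Fm (Gm a) := by decide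

lemma chain_Fm : ∀ a, Chain' Rr (Fm a) := by
  intro a
  fin_cases a <;> simp [Chain', List.isChain_cons_cons, List.isChain_singleton] <;> decide

lemma bdry : ∀ a b, Rr a b → ∀ x ∈ (Fm a).getLast?, ∀ y ∈ (Fm b).head?, Rr x y := by
  decide

lemma chain_applyW : ∀ {w : List (Fin 3)}, Chain' Rr w → Chain' Rr (applyW Fm w) := by
  intro w
  induction w with
  | nil => intro _; simp [applyW, Chain']
  | cons a t ih =>
    intro h
    rw [applyW_cons, Chain', List.isChain_append]
    refine ⟨chain_Fm a, ih (List.IsChain.tail h), ?_⟩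
    intro x hx y hy
    cases t with
    | nil => simp [applyW] at hy
    | cons b t' =>
      have hab : Rr a b := (List.isChain_cons_cons.mp h).1
      apply bdry a b hab x hx
      rw [applyW_cons, List.head?_append] at hy
      have hFb : (Fm b).head? ≠ none := fun hh => Fm_ne_nil b (List.head?_eq_none_iff.mp hh)
      cases hh : (Fm b).head? with
      | none => exact absurd hh hFb
      | some y0 =>
        rw [hh] at hy
        simp at hy
        simp [hh, hy]

lemma Qlem : ∀ (w : List (Fin 3)) (a : Fin 3), Chain' Rr (a :: w) →
    applyW Gm (applyW Fm (a :: w)) ++ cc ((a :: w).getLast (by simp)) =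
      dd a ++ applyW Fm (applyW Gm (a :: w)) := by
  intro w
  induction w with
  | nil =>
    intro a _
    simpa [applyW] using base_id a
  | cons b t ih =>
    intro a h
    have hab : Rr a b := (List.isChain_cons_cons.mp h).1
    have hbt : Chain' Rr (b :: t) := (List.isChain_cons_cons.mp h).2
    have hIH := ih b hbt
    have hlast : (a :: b :: t).getLast (by simp) = (b :: t).getLast (by simp) :=
      List.getLast_cons (by simp)
    rw [hlast, applyW_cons Fm a (b :: t), applyW_append, List.append_assoc, hIH,
      ← List.append_assoc, step_id a b hab, applyW_cons Gm a (b :: t), applyW_append,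
      List.append_assoc]

lemma chain_pre : ∀ m, Chain' Rr (pre Fm 0 m) := by
  intro m
  induction m with
  | zero => simp [pre, Chain']
  | succ k ih => rw [pre_succ]; exact chain_applyW ih

lemma pre_cons (m : ℕ) : ∃ t, pre Fm 0 m = 0 :: t := by
  obtain ⟨t, ht⟩ := pre_prefix (f := Fm) (u := [2]) hF0 (Nat.zero_le m)
  exact ⟨t, by rw [← ht]; rfl⟩

lemma isPref_Gm_pre : ∀ m, IsPref (applyW Gm (pre Fm 0 m)) (fixpt Fm 0) := by
  intro m
  induction m with
  | zero =>
    have hp : applyW Gm (pre Fm 0 0) <+: pre Fm 0 3 := by decide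
    exact (isPref_pre hF0 (by simp) Fm_ne_nil 3).mono hp
  | succ k ih =>
    obtain ⟨t, ht⟩ := pre_cons k
    have hq := Qlem t 0 (ht ▸ chain_pre k)
    have hdd : dd 0 = [] := rfl
    rw [hdd, List.nil_append] at hq
    have hp : applyW Gm (pre Fm 0 (k + 1)) <+: applyW Fm (applyW Gm (pre Fm 0 k)) := by
      rw [pre_succ, ht]
      exact ⟨_, hq⟩
    exact (isPref_applyW hF0 (by simp) Fm_ne_nil ih).mono hp

lemma applyS_Gm_fixpt_Fm : applyS Gm (fixpt Fm 0) = fixpt Fm 0 := by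
  apply applyS_eq_self_of Gm_ne_nil
  intro k
  have h2 : (List.range k).map (fixpt Fm 0) = (pre Fm 0 k).take k :=
    map_range_fixpt hF0 (by simp) Fm_ne_nil k
  rw [h2]
  exact (isPref_Gm_pre k).mono (prefix_applyW Gm (List.take_prefix _ _))

end Specific


/-- `f^∞(0) = g^∞(0)` for `f(0)=02, f(1)=101, f(2)=10` and
`g(0)=0210, g(1)=1, g(2)=10`. -/
theorem stmt_12 :
    fixpt (![[0, 2], [1, 0, 1], [1, 0]] : Fin 3 → List (Fin 3)) 0 =
      fixpt (![[0, 2, 1, 0], [1], [1, 0]] : Fin 3 → List (Fin 3)) 0 := by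
  have h0 : fixpt Fm 0 0 = 0 := by decide
  have h0' : fixpt Gm 0 0 = 0 := by decide
  exact fixed_unique (f := Gm) Gm_ne_nil (by rw [h0, hG0]; simp)
    applyS_Gm_fixpt_Fm (applyS_fixpt hG0 (by simp) Gm_ne_nil) (by rw [h0, h0'])
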